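/- Let q > 3 be a prime power and n ≥ 2. Then the normalizer of SL_n(𝔽_q[t]) in SL_n(𝔽_q((t⁻¹))) is SL_n(𝔽_q[t]) itself: N_{SL_n(𝔽_q((t⁻¹)))}(SL_n(𝔽_q[t])) = SL_n(𝔽_q[t]). -/

import Mathlib

/-!
STATEMENT 15: For q > 3 and n ≥ 2, the normalizer of SL_n(𝔽_q[t]) in SL_n(𝔽_q((t⁻¹)))
is SL_n(𝔽_q[t]) itself.
-/

noncomputable section
open Matrix

variable (Fq : Type) [Field Fq] [Fintype Fq] (n : ℕ)

/-- `F = 𝔽_q((t⁻¹))`, realized as the field of formal Laurent series over `𝔽_q`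
with uniformizer `X = t⁻¹`. -/
abbrev F := LaurentSeries Fq

/-- The ring embedding `𝔽_q[t] → F` sending `t` to `X⁻¹`. -/
def polyEmb : Polynomial Fq →+* F Fq :=
  Polynomial.eval₂RingHom (HahnSeries.C : Fq →+* F Fq)
    ((HahnSeries.ofPowerSeries ℤ Fq PowerSeries.X)⁻¹)

/-- `SL_n(𝔽_q[t])`, the image of `SL_n` of the polynomial ring in `SL_n(F)`. -/
def SLpoly : Subgroup (SpecialLinearGroup (Fin n) (F Fq)) :=
  (SpecialLinearGroup.map (n := Fin n) (polyEmb Fq)).range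

namespace SLNormAux

variable {Fq}

set_option linter.unusedSectionVars false

lemma Xinv_eq : ((HahnSeries.ofPowerSeries ℤ Fq PowerSeries.X)⁻¹ : F Fq)
    = HahnSeries.single (-1 : ℤ) 1 := by
  rw [HahnSeries.ofPowerSeries_X]
  symm
  apply eq_inv_of_mul_eq_one_right
  rw [HahnSeries.single_mul_single]
  norm_num

lemma Xinv_pow (k : ℕ) : (((HahnSeries.ofPowerSeries ℤ Fq PowerSeries.X)⁻¹ : F Fq)) ^ k
    = HahnSeries.single (-(k : ℤ)) 1 := by
  rw [Xinv_eq, HahnSeries.single_pow]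
  norm_num

lemma polyEmb_monomial (k : ℕ) (a : Fq) :
    polyEmb Fq (Polynomial.monomial k a) = HahnSeries.single (-(k:ℤ)) a := by
  rw [polyEmb, Polynomial.coe_eval₂RingHom, Polynomial.eval₂_monomial, Xinv_pow,
    HahnSeries.C_apply, HahnSeries.single_mul_single, zero_add, mul_one]

lemma polyEmb_coeff (p : Polynomial Fq) (k : ℕ) :
    (polyEmb Fq p).coeff (-(k : ℤ)) = p.coeff k := by
  induction p using Polynomial.induction_on' with
  | add p q hp hq => rw [map_add, HahnSeries.coeff_add, hp, hq, Polynomial.coeff_add]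
  | monomial m a =>
    rw [polyEmb_monomial, Polynomial.coeff_monomial, HahnSeries.coeff_single]
    by_cases h : k = m
    · simp [h]
    · have h2 : ¬ (-(k:ℤ) = -(m:ℤ)) := by omega
      simp [h, h2, Ne.symm h]

lemma polyEmb_injective : Function.Injective (polyEmb Fq) := by
  intro p q h
  ext k
  rw [← polyEmb_coeff p k, ← polyEmb_coeff q k, h]

lemma polyEmb_C (a : Fq) : polyEmb Fq (Polynomial.C a) = HahnSeries.C a := by
  rw [polyEmb, Polynomial.coe_eval₂RingHom, Polynomial.eval₂_C]

/-- The image subring `𝔽_q[t] ⊆ F`. -/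
def Rs : Subring (F Fq) := (polyEmb Fq).range

lemma C_mem (a : Fq) : HahnSeries.C a ∈ (Rs : Subring (F Fq)) :=
  ⟨Polynomial.C a, polyEmb_C a⟩

lemma mul_coeff_zero_of (x y : F Fq) (c d : ℤ)
    (hx : ∀ i < c, x.coeff i = 0) (hy : ∀ i < d, y.coeff i = 0) :
    ∀ j < c + d, (x * y).coeff j = 0 := by
  intro j hj
  rw [HahnSeries.coeff_mul]
  apply Finset.sum_eq_zero
  intro ij hij
  rw [Finset.mem_addAntidiagonal] at hij
  obtain ⟨h1, h2, h3⟩ := hij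
  by_cases hcc : ij.1 < c
  · rw [hx _ hcc, zero_mul]
  · have : ij.2 < d := by omega
    rw [hy _ this, mul_zero]

/-- Laurent series supported in nonnegative degrees. -/
def Pos : Subring (F Fq) where
  carrier := {x | ∀ i < (0:ℤ), x.coeff i = 0}
  zero_mem' := by intro i _; simp
  one_mem' := by
    intro i hi
    rw [← HahnSeries.single_zero_one, HahnSeries.coeff_single_of_ne (by omega)]
  add_mem' := by
    intro a b ha hb i hi
    rw [HahnSeries.coeff_add, ha i hi, hb i hi, add_zero]
  neg_mem' := by
    intro a ha i hi
    rw [HahnSeries.coeff_neg, ha i hi, neg_zero]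
  mul_mem' := by
    intro a b ha hb i hi
    exact mul_coeff_zero_of a b 0 0 ha hb i (by omega)

lemma pow_decomp {A : Type*} [CommRing A] (a z : A) (m : ℕ) :
    ∃ w ∈ Subring.closure ({a, z} : Set A),
      (a + z) ^ (m + 1) = a ^ (m + 1) + ((m + 1 : ℕ) : A) * (a ^ m * z) + z * z * w := by
  induction m with
  | zero => exact ⟨0, Subring.zero_mem _, by ring⟩
  | succ m ih =>
    obtain ⟨w, hwmem, hw⟩ := ih
    have ha : a ∈ Subring.closure ({a, z} : Set A) :=
      Subring.subset_closure (by simp)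
    have hz : z ∈ Subring.closure ({a, z} : Set A) :=
      Subring.subset_closure (by simp)
    refine ⟨((m + 1 : ℕ) : A) * a ^ m + w * a + w * z, ?_, ?_⟩
    · exact Subring.add_mem _ (Subring.add_mem _
        (Subring.mul_mem _ (natCast_mem _ _) (Subring.pow_mem _ ha m))
        (Subring.mul_mem _ hwmem ha)) (Subring.mul_mem _ hwmem hz)
    · have : (a + z) ^ (m + 1 + 1) = (a + z) ^ (m + 1) * (a + z) := by ring
      rw [this, hw]
      push_cast
      ring

lemma eq_C_of_pow_eq_C {x : F Fq} {c : Fq} {N : ℕ} (hN : N ≠ 0) (hc : c ≠ 0)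
    (hx : x ^ N = HahnSeries.C c) : ∃ c' : Fq, x = HahnSeries.C c' := by
  have hx0 : x ≠ 0 := by
    intro h
    rw [h, zero_pow hN] at hx
    exact hc (HahnSeries.C_injective (by rw [← hx, map_zero]))
  have ho : x.order = 0 := by
    have h1 : (x ^ N).order = N • x.order := HahnSeries.order_pow x N
    rw [hx, HahnSeries.C_apply, HahnSeries.order_single hc] at h1
    have : (N : ℤ) * x.order = 0 := by rw [← nsmul_eq_mul]; exact h1.symm
    rcases mul_eq_zero.mp this with h | h
    · exact absurd (by exact_mod_cast h) hN
    · exact h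
  set c₀ := x.coeff 0 with hc₀def
  have hc₀ : c₀ ≠ 0 := by
    have := HahnSeries.coeff_order_eq_zero.not.2 hx0
    rwa [ho] at this
  set y := x - HahnSeries.C c₀ with hydef
  have hylow : ∀ i ≤ (0 : ℤ), y.coeff i = 0 := by
    intro i hi
    rw [hydef, HahnSeries.coeff_sub, HahnSeries.C_apply]
    rcases eq_or_lt_of_le hi with rfl | hi'
    · rw [HahnSeries.coeff_single_same]; exact sub_self _
    · rw [HahnSeries.coeff_single_of_ne (by omega),
        HahnSeries.coeff_eq_zero_of_lt_order (by omega), sub_zero]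
  by_cases hy0 : y = 0
  · exact ⟨c₀, by rw [← sub_eq_zero, ← hydef]; exact hy0⟩
  exfalso
  have hoy : 0 < y.order := by
    by_contra hle
    exact HahnSeries.coeff_order_eq_zero.not.2 hy0 (hylow _ (by omega))
  -- characteristic
  set p := ringChar Fq with hpdef
  haveI hcp : CharP Fq p := ringChar.charP Fq
  have hp : p.Prime := CharP.char_is_prime Fq p
  haveI : CharP (F Fq) p :=
    charP_of_injective_ringHom (HahnSeries.C_injective (Γ := ℤ) (R := Fq)) p
  haveI : Fact p.Prime := ⟨hp⟩
  haveI : ExpChar (F Fq) p := ExpChar.prime hp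
  set r := N.factorization p with hrdef
  set m := N / p ^ r with hmdef
  have hNm : p ^ r * m = N := Nat.ordProj_mul_ordCompl_eq_self N p
  have hpm : ¬ p ∣ m := Nat.not_dvd_ordCompl hp hN
  have hm0 : m ≠ 0 := by
    intro h
    rw [h, mul_zero] at hNm
    exact hN hNm.symm
  obtain ⟨m', hm'⟩ := Nat.exists_eq_succ_of_ne_zero hm0
  set z := y ^ p ^ r with hzdef
  have hz0 : z ≠ 0 := pow_ne_zero _ hy0
  set c₁ := c₀ ^ p ^ r with hc₁def
  have hc₁ : c₁ ≠ 0 := pow_ne_zero _ hc₀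
  have hxy : x = HahnSeries.C c₀ + y := by rw [hydef]; ring
  have hxpr : x ^ p ^ r = HahnSeries.C c₁ + z := by
    rw [hxy, add_pow_char_pow, hzdef, hc₁def, _root_.map_pow]
  have hoz : 0 < z.order := by
    rw [hzdef, HahnSeries.order_pow]
    rw [nsmul_eq_mul]
    have hcast : (0:ℤ) < ((p ^ r : ℕ) : ℤ) := by exact_mod_cast pow_pos hp.pos r
    exact mul_pos hcast hoy
  obtain ⟨w, hwmem, hw⟩ := pow_decomp (HahnSeries.C c₁) z m'
  have hwlow : ∀ i < (0:ℤ), w.coeff i = 0 := by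
    have hsub : ({HahnSeries.C c₁, z} : Set (F Fq)) ⊆ (Pos : Subring (F Fq)) := by
      rintro u (rfl | rfl)
      · intro i hi
        rw [HahnSeries.C_apply, HahnSeries.coeff_single_of_ne (by omega)]
      · intro i hi
        exact HahnSeries.coeff_eq_zero_of_lt_order (by omega)
    exact (Subring.closure_le.mpr hsub) hwmem
  have hkey : x ^ N = (HahnSeries.C c₁ + z) ^ m := by
    rw [← hxpr, ← pow_mul, hNm]
  rw [hx, hm', hw] at hkey
  -- take coefficient at z.order
  have hcoeff := congrArg (fun u : F Fq => u.coeff z.order) hkey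
  simp only [HahnSeries.coeff_add] at hcoeff
  have e1 : (HahnSeries.C c).coeff z.order = 0 := by
    rw [HahnSeries.C_apply, HahnSeries.coeff_single_of_ne (by omega)]
  have e2 : ((HahnSeries.C c₁) ^ (m' + 1)).coeff z.order = 0 := by
    rw [← _root_.map_pow, HahnSeries.C_apply, HahnSeries.coeff_single_of_ne (by omega)]
  have e3 : (((m' + 1 : ℕ) : F Fq) * ((HahnSeries.C c₁) ^ m' * z)).coeff z.order
      = ((m' + 1 : ℕ) : Fq) * (c₁ ^ m' * z.coeff z.order) := by
    rw [← map_natCast (HahnSeries.C : Fq →+* F Fq), ← _root_.map_pow, ← mul_assoc, ← _root_.map_mul,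
      HahnSeries.C_mul_eq_smul, HahnSeries.coeff_smul, smul_eq_mul, mul_assoc]
  have e4 : (z * z * w).coeff z.order = 0 := by
    apply mul_coeff_zero_of (z * z) w (z.order + z.order) 0
    · exact mul_coeff_zero_of z z z.order z.order
        (fun i hi => HahnSeries.coeff_eq_zero_of_lt_order hi)
        (fun i hi => HahnSeries.coeff_eq_zero_of_lt_order hi) 
    · exact hwlow
    · omega
  have hfin : ((m' + 1 : ℕ) : Fq) * (c₁ ^ m' * z.coeff z.order) = 0 := by
    rw [e1, e2, e3, e4] at hcoeff
    simpa using hcoeff.symm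
  have h1 : ((m' + 1 : ℕ) : Fq) ≠ 0 := by
    rw [Ne, CharP.cast_eq_zero_iff Fq p]
    intro hd
    exact hpm (by rw [hm', Nat.succ_eq_add_one]; exact hd)
  have h2 : c₁ ^ m' ≠ 0 := pow_ne_zero _ hc₁
  have h3 : z.coeff z.order ≠ 0 := HahnSeries.coeff_order_eq_zero.not.2 hz0
  exact (mul_ne_zero h1 (mul_ne_zero h2 h3)) hfin

lemma exists_ab (hq : 3 < Fintype.card Fq) :
    ∃ a b : Fq, a ≠ 0 ∧ a ≠ 1 ∧ b ≠ 0 ∧ b ≠ 1 ∧ a ≠ b := by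
  classical
  set s : Finset Fq := Finset.univ \ {0, 1} with hs
  have hsub : ({0, 1} : Finset Fq) ⊆ Finset.univ := Finset.subset_univ _
  have hcard2 : ({0, 1} : Finset Fq).card ≤ 2 := by
    apply le_trans (Finset.card_insert_le _ _)
    simp
  have hcard : 1 < s.card := by
    rw [hs, Finset.card_sdiff_of_subset hsub, Finset.card_univ]
    omega
  obtain ⟨a, ha, b, hb, hab⟩ := Finset.one_lt_card.mp hcard
  rw [hs, Finset.mem_sdiff] at ha hb
  simp only [Finset.mem_insert, Finset.mem_singleton, not_or] at ha hb
  exact ⟨a, b, ha.2.1, ha.2.2, hb.2.1, hb.2.2, hab⟩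

lemma delta_ne {a b : Fq} (ha0 : a ≠ 0) (ha1 : a ≠ 1) (hb0 : b ≠ 0) (hb1 : b ≠ 1)
    (hab : a ≠ b) : (a - 1) * (b⁻¹ - 1) - (b - 1) * (a⁻¹ - 1) ≠ 0 := by
  intro h
  have key : ((a - 1) * (b⁻¹ - 1) - (b - 1) * (a⁻¹ - 1)) * (a * b)
      = -((a - b) * (a - 1) * (b - 1)) := by
    field_simp
    ring
  rw [h, zero_mul] at key
  have h1 : a - b ≠ 0 := sub_ne_zero.mpr hab
  have h2 : a - 1 ≠ 0 := sub_ne_zero.mpr ha1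
  have h3 : b - 1 ≠ 0 := sub_ne_zero.mpr hb1
  exact (neg_ne_zero.mpr (mul_ne_zero (mul_ne_zero h1 h2) h3)) key.symm

end SLNormAux

open SLNormAux in
theorem normalizer_SL_poly_eq_self
    (q : ℕ) (hq3 : 3 < q) (hq : ∃ p k : ℕ, p.Prime ∧ 0 < k ∧ q = p ^ k)
    (hcard : Fintype.card Fq = q) (hn : 2 ≤ n) :
    Subgroup.normalizer (SLpoly Fq n : Set (SpecialLinearGroup (Fin n) (F Fq))) = SLpoly Fq n := by
  classical
  refine le_antisymm ?_ Subgroup.le_normalizer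
  intro g hg
  have hn0 : n ≠ 0 := by omega
  haveI : Nontrivial (Fin n) := Fin.nontrivial_iff_two_le.mpr hn
  set V : Matrix (Fin n) (Fin n) (F Fq) := (g : Matrix (Fin n) (Fin n) (F Fq)) with hVdef
  set W : Matrix (Fin n) (Fin n) (F Fq) := ((g⁻¹ : SpecialLinearGroup (Fin n) (F Fq)) :
    Matrix (Fin n) (Fin n) (F Fq)) with hWdef
  have hVW : V * W = 1 := by
    exact congrArg (fun A : SpecialLinearGroup (Fin n) (F Fq) => (A : Matrix (Fin n) (Fin n) (F Fq))) (mul_inv_cancel g)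
  -- conjugation sends entries into the subring Rs
  have hconj : ∀ (h : SpecialLinearGroup (Fin n) (Polynomial Fq)) (i k : Fin n),
      (V * ((h : Matrix (Fin n) (Fin n) (Polynomial Fq)).map (polyEmb Fq)) * W) i k
        ∈ (Rs : Subring (F Fq)) := by
    intro h i k
    have hmem : SpecialLinearGroup.map (n := Fin n) (polyEmb Fq) h ∈ SLpoly Fq n := ⟨h, rfl⟩
    have h2 := (Subgroup.mem_normalizer_iff.mp hg _).mp hmem
    obtain ⟨h', hh'⟩ := h2
    have h3 := congrArg (fun A : SpecialLinearGroup (Fin n) (F Fq) =>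
      (A : Matrix (Fin n) (Fin n) (F Fq))) hh'
    simp only [SpecialLinearGroup.coe_mul, SpecialLinearGroup.map_apply_coe] at h3
    have h4 := congrFun (congrFun h3 i) k
    change ((h' : Matrix (Fin n) (Fin n) (Polynomial Fq)).map (polyEmb Fq)) i k = (V * ((h : Matrix (Fin n) (Fin n) (Polynomial Fq)).map (polyEmb Fq)) * W) i k at h4
    refine ⟨(h' : Matrix (Fin n) (Fin n) (Polynomial Fq)) i k, ?_⟩
    rw [show polyEmb Fq ((h' : Matrix (Fin n) (Fin n) (Polynomial Fq)) i k)
      = ((h' : Matrix (Fin n) (Fin n) (Polynomial Fq)).map (polyEmb Fq)) i k from rfl, h4]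
  -- off-diagonal products
  have hoff : ∀ (l m1 : Fin n), l ≠ m1 → ∀ i k, V i l * W m1 k ∈ (Rs : Subring (F Fq)) := by
    intro l m1 hlm i k
    set T : SpecialLinearGroup (Fin n) (Polynomial Fq) :=
      ⟨Matrix.transvection l m1 1, Matrix.det_transvection_of_ne l m1 hlm 1⟩ with hTdef
    have hmain := hconj T i k
    have hmap : ((T : Matrix (Fin n) (Fin n) (Polynomial Fq)).map (polyEmb Fq))
        = (1 : Matrix (Fin n) (Fin n) (F Fq)) + Matrix.single l m1 1 := by
      rw [hTdef]
      ext a b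
      simp only [Matrix.transvection, Matrix.map_apply, Matrix.add_apply, Matrix.one_apply,
        Matrix.single, Matrix.of_apply]
      rw [map_add]
      split_ifs <;> simp
    have hexp : V * ((T : Matrix (Fin n) (Fin n) (Polynomial Fq)).map (polyEmb Fq)) * W
        = 1 + V * Matrix.single l m1 1 * W := by
      rw [hmap, mul_add, mul_one, add_mul, hVW]
    have hent : (V * Matrix.single l m1 (1 : F Fq) * W) i k = V i l * W m1 k := by
      rw [Matrix.mul_apply]
      rw [Finset.sum_eq_single m1]
      · rw [Matrix.mul_single_apply_same, mul_one]
      · intro j _ hj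
        rw [Matrix.mul_single_apply_of_ne _ _ _ _ _ hj, zero_mul]
      · intro hm; exact absurd (Finset.mem_univ m1) hm
    rw [hexp] at hmain
    rw [Matrix.add_apply, hent] at hmain
    have hone : (1 : Matrix (Fin n) (Fin n) (F Fq)) i k ∈ (Rs : Subring (F Fq)) := by
      rw [Matrix.one_apply]
      split
      · exact Subring.one_mem _
      · exact Subring.zero_mem _
    have := Subring.sub_mem _ hmain hone
    simpa using this
  -- diagonal-unit products
  have hdiagsum : ∀ (l m1 : Fin n), l ≠ m1 → ∀ (a : Fq), a ≠ 0 → ∀ i k,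
      (HahnSeries.C a - 1) * (V i l * W l k) + (HahnSeries.C a⁻¹ - 1) * (V i m1 * W m1 k)
        ∈ (Rs : Subring (F Fq)) := by
    intro l m1 hlm a ha i k
    set d : Fin n → Polynomial Fq :=
      fun j => if j = l then Polynomial.C a else if j = m1 then Polynomial.C a⁻¹ else 1 with hddef
    have hdl : d l = Polynomial.C a := by simp [hddef]
    have hdm : d m1 = Polynomial.C a⁻¹ := by
      simp only [hddef]
      rw [if_neg (fun h : m1 = l => hlm h.symm)]
      simp
    have hdet : (Matrix.diagonal d).det = 1 := by
      rw [Matrix.det_diagonal]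
      rw [← Finset.mul_prod_erase Finset.univ d (Finset.mem_univ l)]
      rw [← Finset.mul_prod_erase (Finset.univ.erase l) d
        (Finset.mem_erase.mpr ⟨fun h => hlm h.symm, Finset.mem_univ m1⟩)]
      rw [Finset.prod_eq_one (fun j hj => ?_), hdl, hdm, mul_one, ← Polynomial.C_mul,
        mul_inv_cancel₀ ha, Polynomial.C_1]
      rw [Finset.mem_erase, Finset.mem_erase] at hj
      simp [hddef, hj.1, hj.2.1]
    set T : SpecialLinearGroup (Fin n) (Polynomial Fq) := ⟨Matrix.diagonal d, hdet⟩ with hTdef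
    have hmain := hconj T i k
    have hmap : ((T : Matrix (Fin n) (Fin n) (Polynomial Fq)).map (polyEmb Fq))
        = Matrix.diagonal (fun j => polyEmb Fq (d j)) := by
      rw [hTdef]
      exact Matrix.diagonal_map (map_zero _)
    rw [hmap] at hmain
    have hentry : (V * Matrix.diagonal (fun j => polyEmb Fq (d j)) * W) i k
        = (V * W) i k + ((HahnSeries.C a - 1) * (V i l * W l k)
            + (HahnSeries.C a⁻¹ - 1) * (V i m1 * W m1 k)) := by
      rw [Matrix.mul_apply, Matrix.mul_apply]
      have hterm : ∀ j : Fin n, (V * Matrix.diagonal (fun j => polyEmb Fq (d j))) i j * W j k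
          = V i j * W j k
            + ((if j = l then (HahnSeries.C a - 1) * (V i l * W l k) else 0)
              + (if j = m1 then (HahnSeries.C a⁻¹ - 1) * (V i m1 * W m1 k) else 0)) := by
        intro j
        rw [Matrix.mul_diagonal]
        by_cases hjl : j = l
        · subst hjl
          rw [if_pos rfl, if_neg hlm, hdl, polyEmb_C]
          ring
        · by_cases hjm : j = m1
          · subst hjm
            rw [if_neg hjl, if_pos rfl, hdm, polyEmb_C]
            ring
          · rw [if_neg hjl, if_neg hjm]
            have hd1 : d j = 1 := by simp [hddef, hjl, hjm]
            rw [hd1, _root_.map_one]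
            ring
      rw [Finset.sum_congr rfl (fun j _ => hterm j)]
      rw [Finset.sum_add_distrib, Finset.sum_add_distrib, Finset.sum_ite_eq', Finset.sum_ite_eq']
      simp
    rw [hentry, hVW] at hmain
    have hone : (1 : Matrix (Fin n) (Fin n) (F Fq)) i k ∈ (Rs : Subring (F Fq)) := by
      rw [Matrix.one_apply]
      split
      · exact Subring.one_mem _
      · exact Subring.zero_mem _
    have := Subring.sub_mem _ hmain hone
    simpa using this
  -- all products (diagonal case)
  have hq4 : 3 < Fintype.card Fq := by omega
  have hdiag : ∀ (l : Fin n) (i k : Fin n), V i l * W l k ∈ (Rs : Subring (F Fq)) := by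
    intro l i k
    obtain ⟨m1, hm1⟩ := exists_ne l
    obtain ⟨a, b, ha0, ha1, hb0, hb1, hab⟩ := exists_ab hq4
    have hP := hdiagsum l m1 (Ne.symm hm1) a ha0 i k
    have hQ := hdiagsum l m1 (Ne.symm hm1) b hb0 i k
    set x := V i l * W l k with hxdef
    set y := V i m1 * W m1 k with hydef
    set Δ : Fq := (a - 1) * (b⁻¹ - 1) - (b - 1) * (a⁻¹ - 1) with hΔdef
    have hΔ : Δ ≠ 0 := delta_ne ha0 ha1 hb0 hb1 hab
    have key : HahnSeries.C Δ * x
        = HahnSeries.C (b⁻¹ - 1) * ((HahnSeries.C a - 1) * x + (HahnSeries.C a⁻¹ - 1) * y)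
          - HahnSeries.C (a⁻¹ - 1) * ((HahnSeries.C b - 1) * x + (HahnSeries.C b⁻¹ - 1) * y) := by
      rw [hΔdef]
      simp only [map_sub, _root_.map_mul, _root_.map_one]
      ring
    have hxval : x = HahnSeries.C Δ⁻¹ * (HahnSeries.C Δ * x) := by
      rw [← mul_assoc, ← _root_.map_mul, inv_mul_cancel₀ hΔ, _root_.map_one, one_mul]
    rw [hxval, key]
    refine Subring.mul_mem _ (C_mem _) (Subring.sub_mem _ ?_ ?_)
    · exact Subring.mul_mem _ (C_mem _) hP
    · exact Subring.mul_mem _ (C_mem _) hQ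
  have hall : ∀ (i l m1 k : Fin n), V i l * W m1 k ∈ (Rs : Subring (F Fq)) := by
    intro i l m1 k
    by_cases h : l = m1
    · subst h; exact hdiag l i k
    · exact hoff l m1 h i k
  -- Part C: reconstruct g over the polynomial ring
  have hi0 : (0:ℕ) < n := by omega
  set i0 : Fin n := ⟨0, hi0⟩ with hi0def
  have hsum1 : ∑ l1, V i0 l1 * W l1 i0 = 1 := by
    rw [← Matrix.mul_apply, hVW, Matrix.one_apply_eq]
  obtain ⟨l0, -, hl0⟩ : ∃ l1 ∈ Finset.univ, V i0 l1 * W l1 i0 ≠ 0 :=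
    Finset.exists_ne_zero_of_sum_ne_zero (by rw [hsum1]; exact one_ne_zero)
  have hv : V i0 l0 ≠ 0 := left_ne_zero_of_mul hl0
  have hw : W l0 i0 ≠ 0 := right_ne_zero_of_mul hl0
  have hAex : ∀ i l : Fin n, ∃ p : Polynomial Fq, polyEmb Fq p = V i l * W l0 i0 :=
    fun i l => hall i l l0 i0
  have hBex : ∀ m1 k : Fin n, ∃ p : Polynomial Fq, polyEmb Fq p = V i0 l0 * W m1 k :=
    fun m1 k => hall i0 l0 m1 k
  choose Ap hAp using hAex
  choose Bp hBp using hBex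
  set Sp : Polynomial Fq := Ap i0 l0 with hSpdef
  have hSp : polyEmb Fq Sp = V i0 l0 * W l0 i0 := hAp i0 l0
  have hSp0 : Sp ≠ 0 := by
    intro h
    rw [h, map_zero] at hSp
    exact hl0 hSp.symm
  have hdvd : ∀ i l m1 k : Fin n, Sp ∣ Ap i l * Bp m1 k := by
    intro i l m1 k
    obtain ⟨T1, hT1⟩ := hall i l m1 k
    refine ⟨T1, polyEmb_injective ?_⟩
    rw [_root_.map_mul, _root_.map_mul, hAp, hBp, hSp, hT1]
    ring
  have hSsum : Sp = ∑ m1, Ap i0 m1 * Bp m1 i0 := by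
    apply polyEmb_injective
    rw [map_sum]
    have hterm : ∀ m1 : Fin n, polyEmb Fq (Ap i0 m1 * Bp m1 i0)
        = (V i0 l0 * W l0 i0) * (V i0 m1 * W m1 i0) := by
      intro m1; rw [_root_.map_mul, hAp, hBp]; ring
    rw [Finset.sum_congr rfl (fun m1 _ => hterm m1), ← Finset.mul_sum, hsum1, mul_one, hSp]
  set I : Ideal (Polynomial Fq) :=
    Ideal.span (Set.range fun pq : Fin n × Fin n => Ap pq.1 pq.2) with hIdef
  set J : Ideal (Polynomial Fq) :=
    Ideal.span (Set.range fun pq : Fin n × Fin n => Bp pq.1 pq.2) with hJdef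
  have hIJ : I * J = Ideal.span {Sp} := by
    apply le_antisymm
    · rw [hIdef, hJdef, Ideal.span_mul_span']
      rw [Ideal.span_le]
      rintro x ⟨aa, ⟨pq, rfl⟩, bb, ⟨pq', rfl⟩, rfl⟩
      exact Ideal.mem_span_singleton.mpr (hdvd pq.1 pq.2 pq'.1 pq'.2)
    · rw [Ideal.span_le, Set.singleton_subset_iff, SetLike.mem_coe, hSsum]
      exact Ideal.sum_mem _ (fun m1 _ => Ideal.mul_mem_mul
        (Ideal.subset_span ⟨(i0, m1), rfl⟩) (Ideal.subset_span ⟨(m1, i0), rfl⟩))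
  obtain ⟨Dp, hDp'⟩ := Submodule.IsPrincipal.principal I
  obtain ⟨Ep, hEp'⟩ := Submodule.IsPrincipal.principal J
  have hDp : I = Ideal.span {Dp} := hDp'
  have hEp : J = Ideal.span {Ep} := hEp'
  have hassoc : Associated (Dp * Ep) Sp := by
    rw [← Ideal.span_singleton_eq_span_singleton, ← Ideal.span_singleton_mul_span_singleton,
      ← hDp, ← hEp, hIJ]
  obtain ⟨u, hu⟩ := hassoc
  have hDdvd : ∀ i l, Dp ∣ Ap i l := by
    intro i l
    have hmem : Ap i l ∈ I := Ideal.subset_span ⟨(i, l), rfl⟩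
    rw [hDp] at hmem
    exact Ideal.mem_span_singleton.mp hmem
  have hEdvd : ∀ m1 k, Ep ∣ Bp m1 k := by
    intro m1 k
    have hmem : Bp m1 k ∈ J := Ideal.subset_span ⟨(m1, k), rfl⟩
    rw [hEp] at hmem
    exact Ideal.mem_span_singleton.mp hmem
  choose A' hA' using hDdvd
  choose B' hB' using hEdvd
  have hD0 : Dp ≠ 0 := by
    intro h
    have h2 := hA' i0 l0
    rw [h, zero_mul] at h2
    exact hSp0 (by rw [hSpdef, h2])
  set f : F Fq := polyEmb Fq Dp / W l0 i0 with hfdef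
  have hpD0 : polyEmb Fq Dp ≠ 0 := fun h => hD0 (polyEmb_injective (by rw [h, map_zero]))
  have hf0 : f ≠ 0 := div_ne_zero hpD0 hw
  have hfV : ∀ i l, V i l = polyEmb Fq (A' i l) * f := by
    intro i l
    have h1 : polyEmb Fq (A' i l) * polyEmb Fq Dp = V i l * W l0 i0 := by
      rw [← _root_.map_mul, mul_comm (A' i l) Dp, ← hA' i l, hAp i l]
    have h2 : V i l = (polyEmb Fq (A' i l) * polyEmb Fq Dp) / W l0 i0 := by
      rw [h1, mul_div_cancel_right₀ _ hw]
    rw [h2, hfdef, mul_div_assoc]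
  have hWf : ∀ m1 k, W m1 k * f = polyEmb Fq ((↑u⁻¹ : Polynomial Fq) * B' m1 k) := by
    intro m1 k
    have huu : (↑u⁻¹ : Polynomial Fq) * ↑u = 1 := Units.inv_mul u
    have hpoly : ((↑u⁻¹ : Polynomial Fq) * B' m1 k) * Sp = (Ep * B' m1 k) * Dp := by
      rw [← hu]
      linear_combination (B' m1 k * Dp * Ep) * huu
    have hkeyF : W m1 k * polyEmb Fq Dp
        = polyEmb Fq ((↑u⁻¹ : Polynomial Fq) * B' m1 k) * W l0 i0 := by
      apply mul_left_cancel₀ hv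
      calc V i0 l0 * (W m1 k * polyEmb Fq Dp)
          = polyEmb Fq (Bp m1 k) * polyEmb Fq Dp := by rw [hBp m1 k]; ring
        _ = polyEmb Fq ((Ep * B' m1 k) * Dp) := by
            rw [← _root_.map_mul, hB' m1 k]
        _ = polyEmb Fq (((↑u⁻¹ : Polynomial Fq) * B' m1 k) * Sp) := by rw [hpoly]
        _ = polyEmb Fq ((↑u⁻¹ : Polynomial Fq) * B' m1 k) * (V i0 l0 * W l0 i0) := by
            rw [_root_.map_mul, hSp]
        _ = V i0 l0 * (polyEmb Fq ((↑u⁻¹ : Polynomial Fq) * B' m1 k) * W l0 i0) := by ring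
    rw [hfdef, ← mul_div_assoc, hkeyF, mul_div_cancel_right₀ _ hw]
  set Pm : Matrix (Fin n) (Fin n) (Polynomial Fq) := Matrix.of (fun i l => A' i l) with hPmdef
  set Qm : Matrix (Fin n) (Fin n) (Polynomial Fq) :=
    Matrix.of (fun m1 k => (↑u⁻¹ : Polynomial Fq) * B' m1 k) with hQmdef
  have hPmap : ∀ i l, polyEmb Fq (Pm i l) = polyEmb Fq (A' i l) := by
    intro i l; rw [hPmdef, Matrix.of_apply]
  have hQmap : ∀ m1 k, polyEmb Fq (Qm m1 k) = W m1 k * f := by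
    intro m1 k; rw [hQmdef, Matrix.of_apply, ← hWf m1 k]
  have hPQ : Pm * Qm = 1 := by
    apply Matrix.ext
    intro i k
    apply polyEmb_injective
    rw [Matrix.mul_apply, map_sum]
    have hterm : ∀ j, polyEmb Fq (Pm i j * Qm j k) = V i j * W j k := by
      intro j
      rw [_root_.map_mul, hPmap, hQmap]
      calc polyEmb Fq (A' i j) * (W j k * f)
          = (polyEmb Fq (A' i j) * f) * W j k := by ring
        _ = V i j * W j k := by rw [← hfV i j]
    rw [Finset.sum_congr rfl (fun j _ => hterm j), ← Matrix.mul_apply, hVW]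
    by_cases hik : i = k
    · subst hik; rw [Matrix.one_apply_eq, Matrix.one_apply_eq, _root_.map_one]
    · rw [Matrix.one_apply_ne hik, Matrix.one_apply_ne hik, map_zero]
  have hVmat : V = f • (Pm.map (polyEmb Fq)) := by
    apply Matrix.ext
    intro i l
    rw [Matrix.smul_apply, Matrix.map_apply, smul_eq_mul, hfV i l, hPmdef, Matrix.of_apply]
    ring
  have hdetV : V.det = 1 := g.prop
  rw [hVmat, Matrix.det_smul, ← RingHom.mapMatrix_apply, ← RingHom.map_det, Fintype.card_fin] at hdetV
  have hPdet_unit : IsUnit Pm.det := by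
    apply IsUnit.of_mul_eq_one Qm.det
    rw [← Matrix.det_mul, hPQ, Matrix.det_one]
  obtain ⟨cP, hcPu, hcP⟩ := Polynomial.isUnit_iff.mp hPdet_unit
  have hcP0 : cP ≠ 0 := hcPu.ne_zero
  have hCcP : (HahnSeries.C cP : F Fq) ≠ 0 :=
    fun h => hcP0 (HahnSeries.C_injective (by rw [h, map_zero]))
  have h1 : f ^ n * HahnSeries.C cP = 1 := by
    rw [← polyEmb_C, hcP]
    exact hdetV
  have hfn : f ^ n = HahnSeries.C (cP⁻¹) := by
    apply mul_right_cancel₀ hCcP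
    rw [h1, ← _root_.map_mul, inv_mul_cancel₀ hcP0, _root_.map_one]
  obtain ⟨c', hc'⟩ := eq_C_of_pow_eq_C hn0 (inv_ne_zero hcP0) hfn
  have hc'n : c' ^ n * cP = 1 := by
    have h2 : (HahnSeries.C (c' ^ n) : F Fq) = HahnSeries.C (cP⁻¹) := by
      rw [_root_.map_pow (HahnSeries.C : Fq →+* F Fq) c' n, ← hc', hfn]
    rw [HahnSeries.C_injective h2, inv_mul_cancel₀ hcP0]
  set G : Matrix (Fin n) (Fin n) (Polynomial Fq) := Polynomial.C c' • Pm with hGdef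
  have hGdet : G.det = 1 := by
    rw [hGdef, Matrix.det_smul, Fintype.card_fin, ← hcP, ← _root_.map_pow, ← _root_.map_mul,
      hc'n, Polynomial.C_1]
  refine ⟨⟨G, hGdet⟩, ?_⟩
  apply Subtype.coe_injective
  show (RingHom.mapMatrix (polyEmb Fq)) G = (g : Matrix (Fin n) (Fin n) (F Fq))
  apply Matrix.ext
  intro i l
  rw [RingHom.mapMatrix_apply, Matrix.map_apply, hGdef, Matrix.smul_apply, smul_eq_mul,
    _root_.map_mul, polyEmb_C]
  show HahnSeries.C c' * polyEmb Fq (Pm i l) = V i l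
  rw [hPmap, hfV i l, hc']
  ring
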